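/- Let {x_k}_{k=1}^{K} be a sequence of vectors in ℝ^d and let Σ₀ be a d×d positive definite matrix. Define Σ_k = Σ₀ + Σ_{i=1}^{k} x_i x_iᵀ for k ≥ 1. Then Σ_{i=1}^{K} min{1, x_iᵀ Σ_{i-1}⁻¹ x_i} ≤ 2·log(det(Σ_K)/det(Σ₀)). Moreover, if ‖x_i‖₂ ≤ L for all i ∈ {1,…,K}, then Σ_{i=1}^{K} min{1, x_iᵀ Σ_{i-1}⁻¹ x_i} ≤ 2·( d·log((trace(Σ₀) + K·L²)/d) − log det(Σ₀) ). -/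

import Mathlib

open Matrix

/-- The Euclidean norm of a vector in `ℝ^d`. -/
noncomputable def euclNorm {d : ℕ} (x : Fin d → ℝ) : ℝ := Real.sqrt (∑ i, x i ^ 2)

lemma aux_min_le_two_log {u : ℝ} (hu : 0 ≤ u) : min 1 u ≤ 2 * Real.log (1 + u) := by
  have h1u : (0:ℝ) < 1 + u := by linarith
  have hlog : 1 - (1+u)⁻¹ ≤ Real.log (1+u) := Real.one_sub_inv_le_log_of_pos h1u
  rcases le_total u 1 with h | h
  · rw [min_eq_right h]
    have he : 1 - (1+u)⁻¹ = u/(1+u) := by field_simp; ring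
    have key : u / (1+u) ≤ Real.log (1+u) := he ▸ hlog
    have h2 : u ≤ 2 * (u/(1+u)) := by
      rw [mul_div_assoc', le_div_iff₀ h1u]; nlinarith
    linarith
  · rw [min_eq_left h]
    have hm : Real.log 2 ≤ Real.log (1+u) := Real.log_le_log (by norm_num) (by linarith)
    have h2 : (0.6931471803 : ℝ) < Real.log 2 := Real.log_two_gt_d9
    linarith

lemma aux_posdef_trace_pos {d : ℕ} (hd : 0 < d) {A : Matrix (Fin d) (Fin d) ℝ}
    (hA : A.PosDef) : 0 < A.trace := by
  have hdiag : ∀ j, 0 < A j j := by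
    intro j
    have h := hA.dotProduct_mulVec_pos (x := Pi.single j 1) (by simp [Function.ne_iff])
    simpa [dotProduct, mulVec, Pi.single_apply, Finset.sum_ite_eq, Finset.sum_ite_eq'] using h
  have h : 0 < ∑ j, A j j :=
    Finset.sum_pos (fun j _ => hdiag j)
      (by simp [Finset.univ_nonempty_iff]; exact Fin.pos_iff_nonempty.mp hd)
  simpa [Matrix.trace, Matrix.diag] using h

lemma aux_trace_eq_sum_eigs {d : ℕ} {A : Matrix (Fin d) (Fin d) ℝ} (hH : A.IsHermitian) :
    A.trace = ∑ i, hH.eigenvalues i := by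
  rw [hH.trace_eq_sum_eigenvalues]
  simp

lemma aux_logdet_le_trace {d : ℕ} (hd : 0 < d) {A : Matrix (Fin d) (Fin d) ℝ} (hA : A.PosDef) :
    Real.log A.det ≤ d * Real.log (A.trace / d) := by
  have hH := hA.isHermitian
  have hpos : ∀ i, 0 < hH.eigenvalues i := hA.eigenvalues_pos
  have hdet : A.det = ∏ i, hH.eigenvalues i := by
    simpa using hH.det_eq_prod_eigenvalues
  have htr : A.trace = ∑ i, hH.eigenvalues i := aux_trace_eq_sum_eigs hH
  have hd' : (0:ℝ) < d := by exact_mod_cast hd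
  have hjen : ∑ i : Fin d, ((d:ℝ))⁻¹ • Real.log (hH.eigenvalues i)
      ≤ Real.log (∑ i : Fin d, ((d:ℝ))⁻¹ • hH.eigenvalues i) := by
    refine (strictConcaveOn_log_Ioi.concaveOn).le_map_sum (fun i _ => by positivity) ?_
      (fun i _ => hpos i)
    simp [Finset.card_univ]
    field_simp
  have hsm : (∑ i : Fin d, ((d:ℝ))⁻¹ • hH.eigenvalues i) = A.trace / d := by
    rw [htr, ← Finset.smul_sum]; simp [smul_eq_mul]; ring
  have hls : Real.log A.det = ∑ i, Real.log (hH.eigenvalues i) := by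
    rw [hdet, Real.log_prod (fun i _ => (hpos i).ne')]
  rw [hls]
  rw [hsm] at hjen
  calc ∑ i, Real.log (hH.eigenvalues i)
      = d * ∑ i : Fin d, ((d:ℝ))⁻¹ • Real.log (hH.eigenvalues i) := by
        rw [← Finset.smul_sum]; simp [smul_eq_mul]; field_simp
    _ ≤ d * Real.log (A.trace / d) := mul_le_mul_of_nonneg_left hjen hd'.le

/-- **Elliptical potential lemma.** With `Σ_k = Σ₀ + ∑_{i=1}^k x_i x_iᵀ` for a positive
definite `Σ₀`, one has `∑_{i=1}^K min{1, x_iᵀ Σ_{i-1}⁻¹ x_i} ≤ 2 log(det Σ_K / det Σ₀)`;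
moreover, if `‖x_i‖₂ ≤ L` for all `i ∈ {1,…,K}`, then the sum is at most
`2 (d log((trace Σ₀ + K L²)/d) − log det Σ₀)`. -/
theorem stmt_4 (d K : ℕ) (hd : 0 < d) (hK : 0 < K) (L : ℝ)
    (x : ℕ → Fin d → ℝ)
    (S0 : Matrix (Fin d) (Fin d) ℝ) (hS0 : S0.PosDef)
    (Sig : ℕ → Matrix (Fin d) (Fin d) ℝ)
    (hSig0 : Sig 0 = S0)
    (hSig : ∀ k, 1 ≤ k → Sig k = S0 + ∑ i ∈ Finset.Icc 1 k, vecMulVec (x i) (x i)) :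
    (∑ i ∈ Finset.Icc 1 K, min 1 (x i ⬝ᵥ ((Sig (i - 1))⁻¹ *ᵥ x i))
        ≤ 2 * Real.log ((Sig K).det / S0.det)) ∧
    ((∀ i ∈ Finset.Icc 1 K, euclNorm (x i) ≤ L) →
      ∑ i ∈ Finset.Icc 1 K, min 1 (x i ⬝ᵥ ((Sig (i - 1))⁻¹ *ᵥ x i))
        ≤ 2 * (d * Real.log ((S0.trace + K * L ^ 2) / d) - Real.log S0.det)) := by
  have posSemidef_vecMulVec : ∀ y : Fin d → ℝ, (vecMulVec y y).PosSemidef := by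
    intro y
    rw [vecMulVec_eq Unit]
    have h : replicateCol Unit y = (replicateRow Unit y)ᴴ := by ext i j; simp
    rw [h]; exact posSemidef_conjTranspose_mul_self _
  have hPSDsum : ∀ k, (∑ i ∈ Finset.Icc 1 k, vecMulVec (x i) (x i)).PosSemidef := by
    intro k
    exact Finset.sum_induction _ _ (fun a b ha hb => ha.add hb) Matrix.PosSemidef.zero
      (fun i _ => posSemidef_vecMulVec (x i))
  have hPD : ∀ k, (Sig k).PosDef := by
    intro k
    rcases Nat.eq_zero_or_pos k with rfl | hk
    · rwa [hSig0]
    · rw [hSig k hk]; exact hS0.add_posSemidef (hPSDsum k)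
  have hstep : ∀ k, Sig (k+1) = Sig k + vecMulVec (x (k+1)) (x (k+1)) := by
    intro k
    rw [hSig (k+1) (by omega), Finset.sum_Icc_succ_top (by omega), ← add_assoc]
    rcases Nat.eq_zero_or_pos k with rfl | hk
    · simp [hSig0]
    · rw [hSig k hk]
  set u : ℕ → ℝ := fun i => x i ⬝ᵥ ((Sig (i-1))⁻¹ *ᵥ x i) with hu
  have hunn : ∀ i, 0 ≤ u i := by
    intro i
    have := ((hPD (i-1)).inv).posSemidef.dotProduct_mulVec_nonneg (x i)
    simpa using this
  have hdet : ∀ k, (Sig (k+1)).det = (Sig k).det * (1 + u (k+1)) := by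
    intro k
    rw [hstep k, vecMulVec_eq Unit,
      det_add_replicateCol_mul_replicateRow (isUnit_iff_ne_zero.mpr (hPD k).det_pos.ne') _ _]
    congr 1
    rw [det_unique]
    have hk1 : (k + 1 - 1) = k := by omega
    have hsym : ∀ a b, (Sig k)⁻¹ a b = (Sig k)⁻¹ b a := fun a b => by
      simpa using ((hPD k).inv.isHermitian.apply a b).symm
    simp [hk1, hu, Matrix.mul_apply, dotProduct, mulVec, Finset.mul_sum, mul_comm]
    exact Finset.sum_congr rfl fun a _ => Finset.sum_congr rfl fun b _ => by rw [hsym b a]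
  have htel : ∀ k, Real.log (Sig k).det
      = Real.log S0.det + ∑ i ∈ Finset.Icc 1 k, Real.log (1 + u i) := by
    intro k
    induction k with
    | zero => simp [hSig0]
    | succ n ih =>
      have hne : (1 : ℝ) + u (n+1) ≠ 0 := by have := hunn (n+1); positivity
      rw [hdet n, Real.log_mul (hPD n).det_pos.ne' hne, ih,
        Finset.sum_Icc_succ_top (by omega)]
      ring
  have hsum1 : ∑ i ∈ Finset.Icc 1 K, min 1 (u i)
      ≤ 2 * (Real.log (Sig K).det - Real.log S0.det) := by
    calc ∑ i ∈ Finset.Icc 1 K, min 1 (u i)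
        ≤ ∑ i ∈ Finset.Icc 1 K, 2 * Real.log (1 + u i) :=
          Finset.sum_le_sum fun i _ => aux_min_le_two_log (hunn i)
      _ = 2 * ∑ i ∈ Finset.Icc 1 K, Real.log (1 + u i) := by rw [Finset.mul_sum]
      _ = 2 * (Real.log (Sig K).det - Real.log S0.det) := by rw [htel K]; ring
  constructor
  · rw [Real.log_div (hPD K).det_pos.ne' hS0.det_pos.ne']
    exact hsum1
  · intro hL
    have hd' : (0:ℝ) < d := by exact_mod_cast hd
    have h1K : 1 ∈ Finset.Icc 1 K := by simp; omega
    have hLnn : 0 ≤ L := le_trans (Real.sqrt_nonneg _) (hL 1 h1K)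
    have hnormsq : ∀ i ∈ Finset.Icc 1 K, ∑ j, x i j ^ 2 ≤ L ^ 2 := by
      intro i hi
      have h2 : euclNorm (x i) ^ 2 = ∑ j, x i j ^ 2 := Real.sq_sqrt (by positivity)
      calc ∑ j, x i j ^ 2 = euclNorm (x i) ^ 2 := h2.symm
        _ ≤ L ^ 2 := pow_le_pow_left₀ (Real.sqrt_nonneg _) (hL i hi) 2
    have htrv : ∀ i, (vecMulVec (x i) (x i)).trace = ∑ j, x i j ^ 2 := fun i => by
      simp [Matrix.trace, Matrix.diag, vecMulVec, sq]
    have htr : (Sig K).trace ≤ S0.trace + K * L ^ 2 := by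
      rw [hSig K hK, Matrix.trace_add, Matrix.trace_sum]
      have hs : ∑ i ∈ Finset.Icc 1 K, (vecMulVec (x i) (x i)).trace
          ≤ ∑ i ∈ Finset.Icc 1 K, L ^ 2 :=
        Finset.sum_le_sum fun i hi => (htrv i) ▸ hnormsq i hi
      have hcard : (Finset.Icc 1 K).card = K := by simp
      rw [Finset.sum_const, hcard, nsmul_eq_mul] at hs
      linarith
    have htrpos : 0 < (Sig K).trace := aux_posdef_trace_pos hd (hPD K)
    have hld : Real.log (Sig K).det ≤ d * Real.log ((S0.trace + K * L ^ 2) / d) := by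
      refine (aux_logdet_le_trace hd (hPD K)).trans ?_
      have hlg : Real.log ((Sig K).trace / d) ≤ Real.log ((S0.trace + K * L ^ 2) / d) :=
        Real.log_le_log (div_pos htrpos hd') (by gcongr)
      exact mul_le_mul_of_nonneg_left hlg hd'.le
    have := hsum1
    linarith
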